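/- Let A ∈ ℂ^{n×n} be skew-Hermitian with eigenvalues i·a₁, …, i·aₙ where each aⱼ is real and satisfies |aⱼ| ≤ π. Then ‖1_n − exp(A)‖_F ≥ (2/π)·‖A‖_F. Equivalently, on the unitary group U(n) = V_{n,n} the geodesic distance r = (1/√2)‖A‖_F and the chordal distance d = ‖1 − exp A‖_F satisfy r ≤ (π/(2√2))·d. -/

import Mathlib

open Matrix

/-- The Frobenius norm of a complex matrix. -/
noncomputable def frobNorm {m n : Type*} [Fintype m] [Fintype n]
    (M : Matrix m n ℂ) : ℝ :=
  Real.sqrt (∑ i, ∑ j, ‖M i j‖ ^ 2)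

lemma frob_sq_eq_trace {n : Type*} [Fintype n] [DecidableEq n] (M : Matrix n n ℂ) :
    (∑ i, ∑ j, ‖M i j‖ ^ 2 : ℝ) = (Matrix.trace (Mᴴ * M)).re := by
  simp only [Matrix.trace, Matrix.diag, Matrix.mul_apply, Matrix.conjTranspose_apply]
  rw [Finset.sum_comm]
  push_cast [Complex.re_sum]
  refine Finset.sum_congr rfl fun i _ => Finset.sum_congr rfl fun j _ => ?_
  rw [Complex.star_def, mul_comm, Complex.mul_conj]
  simp [Complex.normSq_eq_norm_sq, ← Complex.ofReal_pow]

lemma frob_conj {n : Type*} [Fintype n] [DecidableEq n] (V M : Matrix n n ℂ)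
    (hV : V ∈ Matrix.unitaryGroup n ℂ) :
    frobNorm (V * M * Vᴴ) = frobNorm M := by
  have h1 : Vᴴ * V = 1 := by
    simpa [Matrix.star_eq_conjTranspose] using hV.1
  unfold frobNorm
  rw [frob_sq_eq_trace, frob_sq_eq_trace]
  congr 2
  have : (V * M * Vᴴ)ᴴ * (V * M * Vᴴ) = V * (Mᴴ * M) * Vᴴ := by
    simp only [Matrix.conjTranspose_mul, Matrix.conjTranspose_conjTranspose,
      Matrix.mul_assoc]
    rw [← Matrix.mul_assoc Vᴴ V, h1, Matrix.one_mul]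
  rw [this, Matrix.trace_mul_cycle, ← Matrix.mul_assoc, h1, Matrix.one_mul]

lemma frob_diag {n : Type*} [Fintype n] [DecidableEq n] (d : n → ℂ) :
    frobNorm (Matrix.diagonal d) = Real.sqrt (∑ j, ‖d j‖ ^ 2) := by
  unfold frobNorm
  congr 1
  refine Finset.sum_congr rfl fun i _ => ?_
  rw [Finset.sum_eq_single i]
  · simp
  · intro j _ hj; simp [Matrix.diagonal_apply_ne' _ hj]
  · simp

lemma norm_one_sub_exp_sq (x : ℝ) :
    ‖1 - Complex.exp (x * Complex.I)‖ ^ 2 = 2 - 2 * Real.cos x := by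
  have hre : (1 - Complex.exp (x * Complex.I)).re = 1 - Real.cos x := by
    simp [Complex.exp_ofReal_mul_I_re]
  have him : (1 - Complex.exp (x * Complex.I)).im = -Real.sin x := by
    simp [Complex.exp_ofReal_mul_I_im]
  rw [Complex.sq_norm, Complex.normSq_apply, hre, him]
  nlinarith [Real.sin_sq_add_cos_sq x]

lemma key_pointwise {x : ℝ} (hx : |x| ≤ Real.pi) :
    (2 / Real.pi) ^ 2 * x ^ 2 ≤ ‖1 - Complex.exp (x * Complex.I)‖ ^ 2 := by
  have hpi := Real.pi_pos
  have hs : 2 / Real.pi * |x| ≤ 2 * Real.sin (|x| / 2) := by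
    have := Real.mul_le_sin (x := |x| / 2) (by positivity) (by linarith [abs_nonneg x])
    calc 2 / Real.pi * |x| = 2 * (2 / Real.pi * (|x| / 2)) := by ring
    _ ≤ 2 * Real.sin (|x| / 2) := by linarith
  have h0 : 0 ≤ 2 / Real.pi * |x| := by positivity
  have hsq := pow_le_pow_left₀ h0 hs 2
  have hhalf : Real.sin (|x| / 2) ^ 2 = 1 / 2 - Real.cos x / 2 := by
    have h := Real.sin_sq_eq_half_sub (|x| / 2)
    rw [show 2 * (|x| / 2) = |x| by ring, Real.cos_abs] at h
    exact h
  rw [norm_one_sub_exp_sq]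
  calc (2 / Real.pi) ^ 2 * x ^ 2 = (2 / Real.pi * |x|) ^ 2 := by
        rw [mul_pow, sq_abs]
    _ ≤ (2 * Real.sin (|x| / 2)) ^ 2 := hsq
    _ = 2 - 2 * Real.cos x := by rw [mul_pow, hhalf]; ring

/-- On the unitary group `U(n)`, the geodesic distance is bounded by `π/(2√2)` times the
chordal distance: if `A` is skew-Hermitian with eigenvalues `i·aⱼ`, `|aⱼ| ≤ π`, then
`‖1 − exp A‖_F ≥ (2/π)‖A‖_F`. -/
theorem unitary_geodesic_le_chordal (n : ℕ) (A : Matrix (Fin n) (Fin n) ℂ)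
    (a : Fin n → ℝ) (V : Matrix (Fin n) (Fin n) ℂ) (hV : V ∈ Matrix.unitaryGroup (Fin n) ℂ)
    (hA : A = V * Matrix.diagonal (fun j => (a j : ℂ) * Complex.I) * Vᴴ)
    (ha : ∀ j, |a j| ≤ Real.pi) :
    (2 / Real.pi) * frobNorm A ≤ frobNorm (1 - NormedSpace.exp A) := by
  have hpi := Real.pi_pos
  have hVH : V * Vᴴ = 1 := by
    have h := hV.2
    rwa [Matrix.star_eq_conjTranspose] at h
  have hU : IsUnit V := ⟨Unitary.toUnits ⟨V, hV⟩, rfl⟩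
  have hVinv : V⁻¹ = Vᴴ := Matrix.inv_eq_right_inv hVH
  have hexp : NormedSpace.exp A
      = V * Matrix.diagonal (fun j => Complex.exp ((a j : ℂ) * Complex.I)) * Vᴴ := by
    rw [hA, ← hVinv, Matrix.exp_conj V _ hU, Matrix.exp_diagonal, hVinv]
    congr 2
    rw [Pi.exp_def]
    funext j
    rw [← Complex.exp_eq_exp_ℂ]
  have hone : (1 : Matrix (Fin n) (Fin n) ℂ) - NormedSpace.exp A
      = V * Matrix.diagonal (fun j => 1 - Complex.exp ((a j : ℂ) * Complex.I)) * Vᴴ := by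
    have hd : Matrix.diagonal (fun j => 1 - Complex.exp ((a j : ℂ) * Complex.I))
        = 1 - Matrix.diagonal (fun j => Complex.exp ((a j : ℂ) * Complex.I)) := by
      rw [← Matrix.diagonal_one, ← Matrix.diagonal_sub]
    rw [hexp, hd, Matrix.mul_sub, Matrix.sub_mul, Matrix.mul_one, hVH]
  rw [hone, hA, frob_conj _ _ hV, frob_conj _ _ hV, frob_diag, frob_diag]
  have hL : ∀ j, ‖(a j : ℂ) * Complex.I‖ ^ 2 = (a j) ^ 2 := by
    intro j; simp [sq_abs]
  rw [show (∑ j, ‖(a j : ℂ) * Complex.I‖ ^ 2) = ∑ j, (a j) ^ 2 from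
    Finset.sum_congr rfl fun j _ => hL j]
  have h2 : (2 / Real.pi) * Real.sqrt (∑ j, (a j) ^ 2)
      = Real.sqrt ((2 / Real.pi) ^ 2 * ∑ j, (a j) ^ 2) := by
    rw [Real.sqrt_mul (by positivity), Real.sqrt_sq (by positivity)]
  rw [h2]
  apply Real.sqrt_le_sqrt
  rw [Finset.mul_sum]
  refine Finset.sum_le_sum fun j _ => ?_
  exact key_pointwise (ha j)
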